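/- Let $A^{(12)} = |a'\rangle\langle a|$ be a rank-one operator on $\mathcal{H}_1\otimes\mathcal{H}_2$ and $B^{(23)} = |b\rangle\langle b'|$ a rank-one operator on $\mathcal{H}_2\otimes\mathcal{H}_3$, where $|a\rangle,|a'\rangle\in\mathcal{H}_1\otimes\mathcal{H}_2$ and $|b\rangle,|b'\rangle\in\mathcal{H}_2\otimes\mathcal{H}_3$ are unit vectors. Then the operator $(A\otimes\mathbb{1}_3)(\mathbb{1}_1\otimes B)$ on $\mathcal{H}_1\otimes\mathcal{H}_2\otimes\mathcal{H}_3$ has trace norm at most $1$. -/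

import Mathlib

open Matrix
open scoped ComplexOrder

/-- The positive semidefinite square root of a positive semidefinite matrix
(the definition of `Matrix.PosSemidef.sqrt` in the older Mathlib, since removed). -/
noncomputable def Matrix.PosSemidef.sqrt {n : Type*} [Fintype n] [DecidableEq n] {𝕜 : Type*}
    [RCLike 𝕜] {A : Matrix n n 𝕜} (hA : PosSemidef A) : Matrix n n 𝕜 :=
  hA.1.eigenvectorUnitary.1 * diagonal ((↑) ∘ (√·) ∘ hA.1.eigenvalues) *
    (star hA.1.eigenvectorUnitary : Matrix n n 𝕜)

lemma psd_sqrt_posSemidef {n : Type*} [Fintype n] [DecidableEq n] {A : Matrix n n ℂ}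
    (hA : PosSemidef A) : (Matrix.PosSemidef.sqrt hA).PosSemidef := by
  unfold Matrix.PosSemidef.sqrt
  have hd : PosSemidef (diagonal (((↑) ∘ (√·) ∘ hA.1.eigenvalues) : n → ℂ)) := by
    rw [posSemidef_diagonal_iff]
    intro i
    simp [Real.sqrt_nonneg]
  have := hd.mul_mul_conjTranspose_same (hA.1.eigenvectorUnitary : Matrix n n ℂ)
  simpa [Matrix.star_eq_conjTranspose] using this

lemma psd_sqrt_mul_self {n : Type*} [Fintype n] [DecidableEq n] {A : Matrix n n ℂ}
    (hA : PosSemidef A) : Matrix.PosSemidef.sqrt hA * Matrix.PosSemidef.sqrt hA = A := by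
  unfold Matrix.PosSemidef.sqrt
  have hU : (star hA.1.eigenvectorUnitary : Matrix n n ℂ) * hA.1.eigenvectorUnitary = 1 :=
    Unitary.coe_star_mul_self _
  simp only [Matrix.mul_assoc]
  rw [← Matrix.mul_assoc (star hA.1.eigenvectorUnitary : Matrix n n ℂ) _ _, hU, Matrix.one_mul,
    ← Matrix.mul_assoc (diagonal _) (diagonal _), diagonal_mul_diagonal]
  conv_rhs => rw [hA.1.spectral_theorem, Unitary.conjStarAlgAut_apply]
  rw [Matrix.mul_assoc]
  congr 3
  funext i
  simp only [Function.comp_apply]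
  rw [← RCLike.ofReal_mul, Real.mul_self_sqrt (hA.eigenvalues_nonneg i)]

lemma re_star_dot {ι : Type*} [Fintype ι] (x : ι → ℂ) :
    (dotProduct (star x) x).re = ∑ i, Complex.normSq (x i) := by
  simp only [dotProduct, Pi.star_apply, Complex.re_sum]
  refine Finset.sum_congr rfl fun i _ => ?_
  rw [mul_comm, Complex.star_def, Complex.mul_conj]
  simp

lemma re_star_dot_nonneg {ι : Type*} [Fintype ι] (x : ι → ℂ) :
    0 ≤ (dotProduct (star x) x).re := by
  rw [re_star_dot]
  exact Finset.sum_nonneg fun i _ => Complex.normSq_nonneg _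

lemma euc_norm_eq {ι : Type*} [Fintype ι] (x : ι → ℂ) :
    ‖(WithLp.equiv 2 (ι → ℂ)).symm x‖ = Real.sqrt (dotProduct (star x) x).re := by
  rw [EuclideanSpace.norm_eq, re_star_dot]
  congr 1
  refine Finset.sum_congr rfl fun i _ => ?_
  simp [Complex.sq_norm]

/-- Cauchy-Schwarz for dot products of complex vectors. -/
lemma re_dot_le_sqrt_mul_sqrt {ι : Type*} [Fintype ι] (x : ι → ℂ) (y : ι → ℂ) :
    (dotProduct (star x) y).re ≤
      Real.sqrt (dotProduct (star x) x).re * Real.sqrt (dotProduct (star y) y).re := by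
  have key := re_inner_le_norm (𝕜 := ℂ)
    ((WithLp.equiv 2 (ι → ℂ)).symm x) ((WithLp.equiv 2 (ι → ℂ)).symm y)
  rw [EuclideanSpace.inner_eq_star_dotProduct] at key
  simp only [Equiv.apply_symm_apply, RCLike.re_to_complex] at key
  rw [dotProduct_comm] at key
  rwa [euc_norm_eq, euc_norm_eq] at key

lemma trace_ctms_re {α β : Type*} [Fintype α] [Fintype β] (C : Matrix α β ℂ) :
    ((Cᴴ * C).trace).re = ∑ j, ∑ i, Complex.normSq (C i j) := by
  simp only [Matrix.trace, Matrix.diag, Matrix.mul_apply, Matrix.conjTranspose_apply,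
    Complex.re_sum]
  refine Finset.sum_congr rfl fun j _ => Finset.sum_congr rfl fun i _ => ?_
  rw [mul_comm, Complex.star_def, Complex.mul_conj]
  simp

lemma trace_ctms_re_nonneg {α β : Type*} [Fintype α] [Fintype β] (C : Matrix α β ℂ) :
    0 ≤ ((Cᴴ * C).trace).re := by
  rw [trace_ctms_re]
  exact Finset.sum_nonneg fun j _ => Finset.sum_nonneg fun i _ => Complex.normSq_nonneg _

/-- Trace norm of `B * A` is at most the product of Hilbert-Schmidt norms. -/
theorem traceNorm_factor_le {n m : Type*} [Fintype n] [DecidableEq n] [Fintype m]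
    (K : Matrix n n ℂ) (B : Matrix n m ℂ) (A : Matrix m n ℂ) (hK : K = B * A)
    (hA : ((Aᴴ * A).trace).re ≤ 1) (hB : ((Bᴴ * B).trace).re ≤ 1) :
    (((Matrix.PosSemidef.sqrt (Matrix.posSemidef_conjTranspose_mul_self K))).trace).re ≤ 1 := by
  set hS := Matrix.posSemidef_conjTranspose_mul_self K with hhS
  set R : Matrix n n ℂ := Matrix.PosSemidef.sqrt hS with hRdef
  have hR : R.PosSemidef := psd_sqrt_posSemidef hS
  have hH : R.IsHermitian := hR.1
  set V : Matrix n n ℂ := (hH.eigenvectorUnitary : Matrix n n ℂ) with hVdef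
  set lam : n → ℝ := hH.eigenvalues with hlamdef
  have hlam0 : ∀ i, 0 ≤ lam i := hR.eigenvalues_nonneg
  have hVV : Vᴴ * V = 1 := by
    simpa [Matrix.star_eq_conjTranspose] using hH.eigenvectorUnitary.2.1
  have hVV' : V * Vᴴ = 1 := by
    simpa [Matrix.star_eq_conjTranspose] using hH.eigenvectorUnitary.2.2
  have hdiag : Vᴴ * R * V = Matrix.diagonal (fun i => (lam i : ℂ)) := by
    simpa [Matrix.star_eq_conjTranspose, Function.comp_def] using
      hH.conjStarAlgAut_star_eigenvectorUnitary
  -- trace of R is the sum of eigenvalues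
  have htrace : R.trace.re = ∑ i, lam i := by
    have : R.trace = (Vᴴ * R * V).trace := by
      rw [Matrix.trace_mul_cycle, hVV', one_mul]
    rw [this, hdiag, Matrix.trace_diagonal, Complex.re_sum]
    simp
  -- the matrices of the construction
  set N : Matrix n n ℂ := K * V with hNdef
  set W : Matrix m n ℂ := A * V with hWdef
  have hNW : N = B * W := by rw [hNdef, hWdef, hK, Matrix.mul_assoc]
  have hKK : Kᴴ * K = R * R := (psd_sqrt_mul_self hS).symm
  -- N†N is diagonal with entries lam²
  have h1 : Nᴴ * N = Vᴴ * (R * R) * V := by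
    rw [hNdef, Matrix.conjTranspose_mul, ← hKK]
    simp only [Matrix.mul_assoc]
  have h2 : Vᴴ * (R * R) * V = (Vᴴ * R * V) * (Vᴴ * R * V) := by
    simp only [Matrix.mul_assoc]
    rw [← Matrix.mul_assoc V Vᴴ (R * V), hVV', Matrix.one_mul]
  have hNN : Nᴴ * N = Matrix.diagonal (fun i => ((lam i : ℂ))^2) := by
    rw [h1, h2, hdiag, Matrix.diagonal_mul_diagonal]
    refine congrArg Matrix.diagonal (funext fun i => ?_)
    ring
  -- the pseudo-inverse diagonal and the matrix of normalized columns
  set d : n → ℂ := fun i => if lam i = 0 then 0 else ((lam i : ℂ))⁻¹ with hddef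
  set Q : Matrix n n ℂ := N * Matrix.diagonal d with hQdef
  have hlamC : ∀ i, lam i ≠ 0 → ((lam i : ℂ)) ≠ 0 := fun i h => by
    simpa using h
  -- columns
  set u : n → n → ℂ := fun i x => N x i with hudef
  set uhat : n → n → ℂ := fun i x => Q x i with huhatdef
  set w : n → m → ℂ := fun i x => W x i with hwdef
  have hu : ∀ i, u i = B *ᵥ (w i) := by
    intro i
    funext x
    simp only [hudef, hNW, Matrix.mul_apply, Matrix.mulVec, dotProduct, hwdef]
  -- Q† * N is diagonal with entries lam
  have hQN : Qᴴ * N = Matrix.diagonal (fun i => (lam i : ℂ)) := by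
    rw [hQdef, Matrix.conjTranspose_mul, Matrix.diagonal_conjTranspose,
      Matrix.mul_assoc, hNN, Matrix.diagonal_mul_diagonal]
    refine congrArg Matrix.diagonal (funext fun i => ?_)
    by_cases h : lam i = 0
    · simp [hddef, h]
    · simp only [hddef, h, if_false, Pi.star_apply, star_inv₀, Complex.star_def,
        Complex.conj_ofReal]
      field_simp [hlamC i h]
  -- Q† * Q is a 0/1 diagonal
  have hQQ : Qᴴ * Q = Matrix.diagonal (fun i => if lam i = 0 then (0:ℂ) else 1) := by
    rw [hQdef, Matrix.conjTranspose_mul, Matrix.diagonal_conjTranspose, Matrix.mul_assoc,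
      ← Matrix.mul_assoc Nᴴ, hNN, Matrix.diagonal_mul_diagonal, Matrix.diagonal_mul_diagonal]
    refine congrArg Matrix.diagonal (funext fun i => ?_)
    by_cases h : lam i = 0
    · simp [hddef, h]
    · simp only [hddef, h, if_false, Pi.star_apply, star_inv₀, Complex.star_def,
        Complex.conj_ofReal]
      field_simp [hlamC i h]
  -- Q * (0/1 diagonal) = Q
  have hQJ : Q * Matrix.diagonal (fun i => if lam i = 0 then (0:ℂ) else 1) = Q := by
    have hfun : (fun i => d i * (if lam i = 0 then (0:ℂ) else 1)) = d :=
      funext fun i => by by_cases h : lam i = 0 <;> simp [hddef, h]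
    rw [hQdef, Matrix.mul_assoc, Matrix.diagonal_mul_diagonal, hfun]
  -- P := Q * Qᴴ is a hermitian projection
  set P : Matrix n n ℂ := Q * Qᴴ with hPdef
  have hPH : Pᴴ = P := by
    rw [hPdef, Matrix.conjTranspose_mul, Matrix.conjTranspose_conjTranspose]
  have hPP : P * P = P := by
    rw [hPdef, Matrix.mul_assoc, ← Matrix.mul_assoc Qᴴ, hQQ, ← Matrix.mul_assoc, hQJ]
  have h1P : (1 - P) * (1 - P) = 1 - P := by
    rw [Matrix.sub_mul, Matrix.mul_sub, Matrix.mul_sub, hPP]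
    simp
  -- parameters of Cauchy-Schwarz
  set p : n → ℝ := fun i => (dotProduct (star (Bᴴ *ᵥ uhat i)) (Bᴴ *ᵥ uhat i)).re with hpdef
  set q : n → ℝ := fun i => (dotProduct (star (w i)) (w i)).re with hqdef
  have hp0 : ∀ i, 0 ≤ p i := fun i => re_star_dot_nonneg _
  have hq0 : ∀ i, 0 ≤ q i := fun i => re_star_dot_nonneg _
  -- adjoint identity
  have hadj : ∀ (x : n → ℂ) (y : m → ℂ),
      dotProduct (star x) (B *ᵥ y) = dotProduct (star (Bᴴ *ᵥ x)) y := by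
    intro x y
    rw [Matrix.dotProduct_mulVec, Matrix.star_mulVec, Matrix.conjTranspose_conjTranspose]
  -- each eigenvalue is bounded
  have hlam_le : ∀ i, lam i ≤ Real.sqrt (p i) * Real.sqrt (q i) := by
    intro i
    have e1 : dotProduct (star (uhat i)) (u i) = (lam i : ℂ) := by
      have : dotProduct (star (uhat i)) (u i) = (Qᴴ * N) i i := by
        simp only [huhatdef, hudef, Matrix.mul_apply, dotProduct,
          Matrix.conjTranspose_apply, Pi.star_apply]
      rw [this, hQN, Matrix.diagonal_apply_eq]
    have e2 : dotProduct (star (Bᴴ *ᵥ uhat i)) (w i) = (lam i : ℂ) := by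
      rw [← hadj, ← hu, e1]
    have := re_dot_le_sqrt_mul_sqrt (Bᴴ *ᵥ uhat i) (w i)
    rw [e2] at this
    simpa [hpdef, hqdef] using this
  -- sum of q: Hilbert-Schmidt norm of A
  have hqsum : ∑ i, q i ≤ 1 := by
    have e1 : ∑ i, q i = ((Wᴴ * W).trace).re := by
      rw [Matrix.trace, Complex.re_sum]
      refine Finset.sum_congr rfl fun i _ => ?_
      simp only [hqdef, Matrix.diag_apply, Matrix.mul_apply, dotProduct,
        Matrix.conjTranspose_apply, Pi.star_apply, hwdef]
    have e2 : (Wᴴ * W).trace = (Aᴴ * A).trace := by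
      rw [hWdef, Matrix.conjTranspose_mul, Matrix.trace_mul_comm]
      rw [show A * V * (Vᴴ * Aᴴ) = A * (V * Vᴴ) * Aᴴ by simp only [Matrix.mul_assoc],
        hVV', Matrix.mul_one, Matrix.trace_mul_comm]
    rw [e1, e2]
    exact hA
  -- sum of p: Bessel-type bound by the Hilbert-Schmidt norm of B
  have hpsum : ∑ i, p i ≤ 1 := by
    have e1 : ∑ i, p i = (((Bᴴ * Q)ᴴ * (Bᴴ * Q)).trace).re := by
      rw [Matrix.trace, Complex.re_sum]
      refine Finset.sum_congr rfl fun i _ => ?_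
      have hcol : ∀ x, (Bᴴ *ᵥ uhat i) x = (Bᴴ * Q) x i := by
        intro x
        simp only [Matrix.mulVec, Matrix.mul_apply, dotProduct, huhatdef]
      simp only [hpdef, Matrix.diag_apply, Matrix.mul_apply, dotProduct,
        Matrix.conjTranspose_apply, Pi.star_apply, hcol]
    have e2 : ((Bᴴ * Q)ᴴ * (Bᴴ * Q)).trace = (Bᴴ * (P * B)).trace := by
      rw [Matrix.conjTranspose_mul, Matrix.conjTranspose_conjTranspose]
      rw [show Qᴴ * B * (Bᴴ * Q) = Qᴴ * (B * (Bᴴ * Q)) by simp only [Matrix.mul_assoc]]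
      rw [Matrix.trace_mul_comm, hPdef]
      rw [show B * (Bᴴ * Q) * Qᴴ = Bᴴᴴ * (Bᴴ * (Q * Qᴴ)) by
        simp only [Matrix.mul_assoc, Matrix.conjTranspose_conjTranspose]]
      rw [Matrix.trace_mul_comm, Matrix.conjTranspose_conjTranspose]
      simp only [Matrix.mul_assoc]
    have e3 : Bᴴ * (P * B) = Bᴴ * B - ((1 - P) * B)ᴴ * ((1 - P) * B) := by
      have : ((1 - P) * B)ᴴ * ((1 - P) * B) = Bᴴ * ((1 - P) * B) := by
        rw [Matrix.conjTranspose_mul, Matrix.conjTranspose_sub, Matrix.conjTranspose_one,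
          hPH, Matrix.mul_assoc, ← Matrix.mul_assoc (1 - P), h1P]
      rw [this, Matrix.sub_mul, Matrix.one_mul, Matrix.mul_sub]
      abel
    have e4 := trace_ctms_re_nonneg ((1 - P) * B)
    rw [e1, e2, e3]
    have : (Bᴴ * B - ((1 - P) * B)ᴴ * ((1 - P) * B)).trace
        = (Bᴴ * B).trace - (((1 - P) * B)ᴴ * ((1 - P) * B)).trace := by
      rw [Matrix.trace_sub]
    rw [this, Complex.sub_re]
    linarith
  -- assemble
  calc R.trace.re = ∑ i, lam i := htrace
    _ ≤ ∑ i, Real.sqrt (p i) * Real.sqrt (q i) :=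
        Finset.sum_le_sum fun i _ => hlam_le i
    _ ≤ Real.sqrt (∑ i, p i) * Real.sqrt (∑ i, q i) :=
        Real.sum_sqrt_mul_sqrt_le _ hp0 hq0
    _ ≤ Real.sqrt 1 * Real.sqrt 1 := by
        exact mul_le_mul (Real.sqrt_le_sqrt hpsum) (Real.sqrt_le_sqrt hqsum)
          (Real.sqrt_nonneg _) (Real.sqrt_nonneg _)
    _ = 1 := by simp



lemma sum_normSq_eq_one {ι : Type*} [Fintype ι] (x : ι → ℂ)
    (hx : dotProduct (star x) x = 1) : ∑ i, Complex.normSq (x i) = 1 := by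
  have := congrArg Complex.re hx
  rwa [re_star_dot, Complex.one_re] at this

lemma sum_factor_prod {α β : Type*} [Fintype α] [Fintype β] (f : α → ℝ) (g : β → ℝ) :
    ∑ s : α × β, f s.1 * g s.2 = (∑ x, f x) * (∑ y, g y) := by
  rw [Finset.sum_mul_sum, Fintype.sum_prod_type]

set_option maxHeartbeats 1000000 in
/-- For unit vectors `a, a' ∈ H₁⊗H₂` and `b, b' ∈ H₂⊗H₃`, the operator
`(|a'⟩⟨a| ⊗ 1₃)(1₁ ⊗ |b⟩⟨b'|)` on `H₁⊗H₂⊗H₃` has trace norm at most 1. -/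
theorem stmt13 {d1 d2 d3 : ℕ}
    (a a' : Fin d1 × Fin d2 → ℂ) (b b' : Fin d2 × Fin d3 → ℂ)
    (ha : dotProduct (star a) a = 1) (ha' : dotProduct (star a') a' = 1)
    (hb : dotProduct (star b) b = 1) (hb' : dotProduct (star b') b' = 1) :
    (((Matrix.PosSemidef.sqrt (Matrix.posSemidef_conjTranspose_mul_self
        ((Matrix.of fun x y : Fin d1 × Fin d2 × Fin d3 =>
            a' (x.1, x.2.1) * star (a (y.1, y.2.1)) *
              (if x.2.2 = y.2.2 then (1 : ℂ) else 0)) *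
          (Matrix.of fun x y : Fin d1 × Fin d2 × Fin d3 =>
            (if x.1 = y.1 then (1 : ℂ) else 0) *
              b (x.2.1, x.2.2) * star (b' (y.2.1, y.2.2))))))).trace).re ≤ 1 := by
  set C : Matrix (Fin d1 × Fin d2 × Fin d3) (Fin d2) ℂ :=
    Matrix.of fun x z => a' (x.1, x.2.1) * b (z, x.2.2) with hCdef
  set D : Matrix (Fin d2) (Fin d1 × Fin d2 × Fin d3) ℂ :=
    Matrix.of fun z y => star (a (y.1, z)) * star (b' (y.2.1, y.2.2)) with hDdef
  -- the factorization through H₂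
  have hK : ((Matrix.of fun x y : Fin d1 × Fin d2 × Fin d3 =>
            a' (x.1, x.2.1) * star (a (y.1, y.2.1)) *
              (if x.2.2 = y.2.2 then (1 : ℂ) else 0)) *
          (Matrix.of fun x y : Fin d1 × Fin d2 × Fin d3 =>
            (if x.1 = y.1 then (1 : ℂ) else 0) *
              b (x.2.1, x.2.2) * star (b' (y.2.1, y.2.2)))) = C * D := by
    ext x y
    rw [Matrix.mul_apply, Matrix.mul_apply]
    simp only [Matrix.of_apply, hCdef, hDdef]
    rw [Fintype.sum_prod_type]
    rw [Finset.sum_eq_single y.1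
      (by intro w1 _ h; apply Finset.sum_eq_zero; intro w2 _; simp [h]) (by simp)]
    rw [Fintype.sum_prod_type]
    refine Finset.sum_congr rfl fun z _ => ?_
    rw [Finset.sum_eq_single x.2.2 (by intro w3 _ h; simp [Ne.symm h]) (by simp)]
    simp
    ring
  -- the Hilbert-Schmidt norms
  have ha1 : ∑ p : Fin d1 × Fin d2, Complex.normSq (a p) = 1 := sum_normSq_eq_one a ha
  have ha'1 : ∑ p : Fin d1 × Fin d2, Complex.normSq (a' p) = 1 := sum_normSq_eq_one a' ha'
  have hb1 : ∑ p : Fin d2 × Fin d3, Complex.normSq (b p) = 1 := sum_normSq_eq_one b hb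
  have hb'1 : ∑ p : Fin d2 × Fin d3, Complex.normSq (b' p) = 1 := sum_normSq_eq_one b' hb'
  have hD1 : ((Dᴴ * D).trace).re ≤ 1 := by
    rw [trace_ctms_re]
    calc (∑ j : Fin d1 × Fin d2 × Fin d3, ∑ i : Fin d2, Complex.normSq (D i j))
        = ∑ r : (Fin d1 × Fin d2 × Fin d3) × Fin d2, Complex.normSq (D r.2 r.1) :=
          (Fintype.sum_prod_type (fun r : (Fin d1 × Fin d2 × Fin d3) × Fin d2 =>
            Complex.normSq (D r.2 r.1))).symm
      _ = ∑ s : (Fin d1 × Fin d2) × (Fin d2 × Fin d3),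
            Complex.normSq (a s.1) * Complex.normSq (b' s.2) := by
          refine Fintype.sum_equiv ⟨fun r => ((r.1.1, r.2), (r.1.2.1, r.1.2.2)),
            fun s => ((s.1.1, (s.2.1, s.2.2)), s.1.2), fun _ => rfl, fun _ => rfl⟩
            _ _ fun r => ?_
          simp [hDdef, Complex.normSq_mul]
      _ = (∑ p : Fin d1 × Fin d2, Complex.normSq (a p)) *
            (∑ p : Fin d2 × Fin d3, Complex.normSq (b' p)) :=
          sum_factor_prod (fun p => Complex.normSq (a p)) (fun p => Complex.normSq (b' p))
      _ ≤ 1 := by rw [ha1, hb'1, one_mul]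
  have hC1 : ((Cᴴ * C).trace).re ≤ 1 := by
    rw [trace_ctms_re]
    calc (∑ z : Fin d2, ∑ x : Fin d1 × Fin d2 × Fin d3, Complex.normSq (C x z))
        = ∑ r : Fin d2 × (Fin d1 × Fin d2 × Fin d3), Complex.normSq (C r.2 r.1) :=
          (Fintype.sum_prod_type (fun r : Fin d2 × (Fin d1 × Fin d2 × Fin d3) =>
            Complex.normSq (C r.2 r.1))).symm
      _ = ∑ s : (Fin d1 × Fin d2) × (Fin d2 × Fin d3),
            Complex.normSq (a' s.1) * Complex.normSq (b s.2) := by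
          refine Fintype.sum_equiv ⟨fun r => ((r.2.1, r.2.2.1), (r.1, r.2.2.2)),
            fun s => (s.2.1, (s.1.1, (s.1.2, s.2.2))), fun _ => rfl, fun _ => rfl⟩
            _ _ fun r => ?_
          simp [hCdef, Complex.normSq_mul]
      _ = (∑ p : Fin d1 × Fin d2, Complex.normSq (a' p)) *
            (∑ p : Fin d2 × Fin d3, Complex.normSq (b p)) :=
          sum_factor_prod (fun p => Complex.normSq (a' p)) (fun p => Complex.normSq (b p))
      _ ≤ 1 := by rw [ha'1, hb1, one_mul]
  exact traceNorm_factor_le _ C D hK hD1 hC1
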